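/- Let V be a finite set of N nodes partitioned into two sensitive groups S₀ and S₁ of sizes N₀ ≥ 1 and N₁ ≥ 1, and let F : V → ℝ^d have group means ν⁽ˢ⁾ = (1/N_s)·Σ_{i∈S_s} F_i for s ∈ {0,1}. Suppose D ≥ 0 satisfies ‖F_i − ν⁽ˢ⁾‖ ≤ D for every node i in group S_s (s ∈ {0,1}). Let g : ℝ² → ℝ² and L > 0 satisfy 2·|g(x)₁ − g(y)₁| ≤ L·‖x − y‖ for all x, y ∈ ℝ², and let W ∈ ℝ^{d×2}. Then |(1/N₀)·Σ_{i∈S₀} g(WᵀF_i)₁ − (1/N₁)·Σ_{j∈S₁} g(WᵀF_j)₁| ≤ (L/2)·‖W‖_op·(‖ν⁽⁰⁾ − ν⁽¹⁾‖ + 2D). -/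

import Mathlib

open Matrix Finset

/-- The sensitive group `S_b`, where group membership is given by `grp`
(`false` encodes `S₀` and `true` encodes `S₁`). -/
def sgrp {V : Type*} [Fintype V] (grp : V → Bool) (b : Bool) : Finset V :=
  Finset.univ.filter (fun i => grp i = b)

/-- `A` acting on a Euclidean vector `v`, i.e. the matrix-vector product `A v`. -/
noncomputable def mulVecE {m n : ℕ} (A : Matrix (Fin m) (Fin n) ℝ)
    (v : EuclideanSpace ℝ (Fin n)) : EuclideanSpace ℝ (Fin m) :=
  WithLp.toLp 2 (fun i => ∑ j, A i j * v j)

/-- The operator norm of `W ∈ ℝ^{d×2}`, viewed (via `v ↦ Wᵀ v`) as a linear map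
`ℝ^d → ℝ²` between Euclidean spaces. -/
noncomputable def opNorm {d : ℕ} (W : Matrix (Fin d) (Fin 2) ℝ) : ℝ :=
  ‖LinearMap.toContinuousLinearMap (Matrix.toEuclideanLin Wᵀ)‖

/-- If every node's representation is within distance `D` of its group mean `ν⁽ˢ⁾`, and
`2·|g(x)₁ − g(y)₁| ≤ L·‖x − y‖`, then the demographic-parity gap of `i ↦ g(WᵀF_i)₁` is at
most `(L/2)·‖W‖_op·(‖ν⁽⁰⁾ − ν⁽¹⁾‖ + 2D)`. -/
theorem stmt8 {V : Type*} [Fintype V] {d : ℕ}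
    (grp : V → Bool) (N₀ N₁ : ℕ)
    (hcard0 : (sgrp grp false).card = N₀) (hcard1 : (sgrp grp true).card = N₁)
    (hN₀ : 1 ≤ N₀) (hN₁ : 1 ≤ N₁)
    (F : V → EuclideanSpace ℝ (Fin d))
    (ν : Bool → EuclideanSpace ℝ (Fin d))
    (hν : ∀ b, ν b = (((sgrp grp b).card : ℝ))⁻¹ • ∑ i ∈ sgrp grp b, F i)
    (D : ℝ) (hD : 0 ≤ D)
    (hdev : ∀ i : V, ‖F i - ν (grp i)‖ ≤ D)
    (g : EuclideanSpace ℝ (Fin 2) → EuclideanSpace ℝ (Fin 2))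
    (L : ℝ) (hL : 0 < L)
    (hLip : ∀ x y : EuclideanSpace ℝ (Fin 2), 2 * |g x 1 - g y 1| ≤ L * ‖x - y‖)
    (W : Matrix (Fin d) (Fin 2) ℝ) :
    |(1 / (N₀ : ℝ)) * ∑ i ∈ sgrp grp false, g (mulVecE Wᵀ (F i)) 1
        - (1 / (N₁ : ℝ)) * ∑ j ∈ sgrp grp true, g (mulVecE Wᵀ (F j)) 1| ≤
      L / 2 * opNorm W * (‖ν false - ν true‖ + 2 * D) := by
  set T := LinearMap.toContinuousLinearMap (Matrix.toEuclideanLin Wᵀ) with hTdef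
  have hTapp : ∀ v, mulVecE Wᵀ v = T v := by
    intro v
    ext i
    simp [mulVecE, hTdef, Matrix.toEuclideanLin, Matrix.mulVec, dotProduct]
  set K := opNorm W with hKdef
  have hK : 0 ≤ K := norm_nonneg _
  have hTlip : ∀ x y : EuclideanSpace ℝ (Fin d), ‖T x - T y‖ ≤ K * ‖x - y‖ := by
    intro x y
    rw [← map_sub]
    exact T.le_opNorm _
  have hpt : ∀ i : V, |g (mulVecE Wᵀ (F i)) 1 - g (T (ν (grp i))) 1| ≤ L / 2 * (K * D) := by
    intro i
    have h1 := hLip (mulVecE Wᵀ (F i)) (T (ν (grp i)))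
    rw [hTapp] at h1 ⊢
    have h2 : ‖T (F i) - T (ν (grp i))‖ ≤ K * D := by
      calc ‖T (F i) - T (ν (grp i))‖ ≤ K * ‖F i - ν (grp i)‖ := hTlip _ _
        _ ≤ K * D := by exact mul_le_mul_of_nonneg_left (hdev i) hK
    nlinarith [abs_nonneg (g (T (F i)) 1 - g (T (ν (grp i))) 1)]
  have havg : ∀ (b : Bool) (N : ℕ), (sgrp grp b).card = N → 1 ≤ N →
      |(1 / (N : ℝ)) * ∑ i ∈ sgrp grp b, g (mulVecE Wᵀ (F i)) 1 - g (T (ν b)) 1|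
        ≤ L / 2 * (K * D) := by
    intro b N hcard hN
    have hNpos : (0 : ℝ) < N := by exact_mod_cast hN
    have hsum : (1 / (N : ℝ)) * ∑ i ∈ sgrp grp b, g (mulVecE Wᵀ (F i)) 1 - g (T (ν b)) 1
        = (1 / (N : ℝ)) * ∑ i ∈ sgrp grp b, (g (mulVecE Wᵀ (F i)) 1 - g (T (ν b)) 1) := by
      rw [Finset.sum_sub_distrib, Finset.sum_const, hcard, mul_sub, nsmul_eq_mul]
      field_simp
    rw [hsum, abs_mul, abs_of_pos (by positivity : (0:ℝ) < 1 / (N:ℝ))]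
    have hb : |∑ i ∈ sgrp grp b, (g (mulVecE Wᵀ (F i)) 1 - g (T (ν b)) 1)|
        ≤ N * (L / 2 * (K * D)) := by
      calc |∑ i ∈ sgrp grp b, (g (mulVecE Wᵀ (F i)) 1 - g (T (ν b)) 1)|
          ≤ ∑ i ∈ sgrp grp b, |g (mulVecE Wᵀ (F i)) 1 - g (T (ν b)) 1| :=
            Finset.abs_sum_le_sum_abs _ _
        _ ≤ ∑ _i ∈ sgrp grp b, L / 2 * (K * D) := by
            apply Finset.sum_le_sum
            intro i hi
            have : grp i = b := by
              simpa [sgrp] using hi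
            simpa [this] using hpt i
        _ = N * (L / 2 * (K * D)) := by rw [Finset.sum_const, hcard]; ring
    calc (1 / (N:ℝ)) * |∑ i ∈ sgrp grp b, (g (mulVecE Wᵀ (F i)) 1 - g (T (ν b)) 1)|
        ≤ (1 / (N:ℝ)) * (N * (L / 2 * (K * D))) := by
          exact mul_le_mul_of_nonneg_left hb (by positivity)
      _ = L / 2 * (K * D) := by field_simp
  have hmid : |g (T (ν false)) 1 - g (T (ν true)) 1| ≤ L / 2 * (K * ‖ν false - ν true‖) := by
    have h1 := hLip (T (ν false)) (T (ν true))
    have h2 := hTlip (ν false) (ν true)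
    nlinarith
  have h0 := havg false N₀ hcard0 hN₀
  have h1 := havg true N₁ hcard1 hN₁
  calc |(1 / (N₀ : ℝ)) * ∑ i ∈ sgrp grp false, g (mulVecE Wᵀ (F i)) 1
        - (1 / (N₁ : ℝ)) * ∑ j ∈ sgrp grp true, g (mulVecE Wᵀ (F j)) 1|
      ≤ |(1 / (N₀ : ℝ)) * ∑ i ∈ sgrp grp false, g (mulVecE Wᵀ (F i)) 1 - g (T (ν false)) 1|
        + |g (T (ν false)) 1 - g (T (ν true)) 1|
        + |g (T (ν true)) 1 - (1 / (N₁ : ℝ)) * ∑ j ∈ sgrp grp true, g (mulVecE Wᵀ (F j)) 1| := by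
          have := abs_sub_le ((1 / (N₀ : ℝ)) * ∑ i ∈ sgrp grp false, g (mulVecE Wᵀ (F i)) 1)
            (g (T (ν false)) 1)
            ((1 / (N₁ : ℝ)) * ∑ j ∈ sgrp grp true, g (mulVecE Wᵀ (F j)) 1)
          have h3 := abs_sub_le (g (T (ν false)) 1) (g (T (ν true)) 1)
            ((1 / (N₁ : ℝ)) * ∑ j ∈ sgrp grp true, g (mulVecE Wᵀ (F j)) 1)
          linarith
    _ ≤ L / 2 * (K * D) + L / 2 * (K * ‖ν false - ν true‖) + L / 2 * (K * D) := by
          rw [abs_sub_comm] at h1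
          linarith
    _ = L / 2 * K * (‖ν false - ν true‖ + 2 * D) := by ring
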